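/- arXiv:1403.2186 — 4 statements merged into one kernel-verified Lean document; each statement's English description precedes it below -/
import Mathlib

section
/- If U is a feasible solution of M-CLP and P is a feasible solution of M-CLP*, then the dual objective is at least the primal objective: ∫₀ᵀ (β+(T−t)b)ᵀ dP(t) ≥ ∫₀ᵀ (γ+(T−t)c)ᵀ dU(t) (weak duality). -/
open MeasureTheory Set

/-- Objective of M-CLP type: ∑_j ∫_{[0,T]} (g j + (T-t) * c j) d(U j)(t),
where each `U j` is a Stieltjes function (nondecreasing, right continuous). -/
noncomputable def mclpObj {n : ℕ} (T : ℝ) (g c : Fin n → ℝ)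
    (U : Fin n → StieltjesFunction ℝ) : ℝ :=
  ∑ j, ∫ t in Icc (0:ℝ) T, (g j + (T - t) * c j) ∂(U j).measure

/-- Feasibility for M-CLP: U vanishes before 0 (so U(0-)=0), is nonnegative,
and A U(t) ≤ β + b t on [0,T]. Monotonicity and right continuity are part of
`StieltjesFunction`. -/
def mclpFeasible {K J : ℕ} (A : Matrix (Fin K) (Fin J) ℝ) (β b : Fin K → ℝ)
    (T : ℝ) (U : Fin J → StieltjesFunction ℝ) : Prop :=
  (∀ j, ∀ t < (0:ℝ), U j t = 0) ∧ (∀ j t, 0 ≤ U j t) ∧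
  ∀ t ∈ Icc (0:ℝ) T, ∀ k, (∑ j, A k j * U j t) ≤ β k + b k * t

/-- Feasibility for the dual M-CLP*: P vanishes before 0, is nonnegative,
and Aᵀ P(t) ≥ γ + c t on [0,T]. -/
def mclpDualFeasible {K J : ℕ} (A : Matrix (Fin K) (Fin J) ℝ) (γ c : Fin J → ℝ)
    (T : ℝ) (P : Fin K → StieltjesFunction ℝ) : Prop :=
  (∀ k, ∀ t < (0:ℝ), P k t = 0) ∧ (∀ k t, 0 ≤ P k t) ∧
  ∀ t ∈ Icc (0:ℝ) T, ∀ j, γ j + c j * t ≤ ∑ k, A k j * P k t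


open Filter Topology
lemma stj_leftLim_zero (f : StieltjesFunction ℝ) (h0 : ∀ t < (0:ℝ), f t = 0) :
    Function.leftLim f 0 = 0 := by
  have hne : (𝓝[<] (0:ℝ)) ≠ ⊥ := (nhdsLT_neBot 0).ne'
  refine leftLim_eq_of_tendsto ?_
  have heq : (fun _ : ℝ => (0:ℝ)) =ᶠ[𝓝[<] (0:ℝ)] f :=
    eventuallyEq_of_mem self_mem_nhdsWithin (fun x hx => (h0 x hx).symm)
  exact Tendsto.congr' heq tendsto_const_nhds

lemma stj_measure_Icc_eq (f : StieltjesFunction ℝ) (h0 : ∀ t < (0:ℝ), f t = 0)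
    (x : ℝ) : f.measure (Icc 0 x) = ENNReal.ofReal (f x) := by
  rw [f.measure_Icc, stj_leftLim_zero f h0, sub_zero]

lemma stj_finite_restrict (f : StieltjesFunction ℝ) (T : ℝ) :
    IsFiniteMeasure (f.measure.restrict (Icc (0:ℝ) T)) := by
  constructor
  rw [Measure.restrict_apply_univ]
  exact isCompact_Icc.measure_lt_top

lemma stj_swap (T : ℝ) (hT : 0 ≤ T) (f g : StieltjesFunction ℝ)
    (hf0 : ∀ t < (0:ℝ), f t = 0) (hg0 : ∀ t < (0:ℝ), g t = 0)
    (hfnn : ∀ t, 0 ≤ f t) (hgnn : ∀ t, 0 ≤ g t) :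
    ∫ t in Icc (0:ℝ) T, g (T - t) ∂f.measure
      = ∫ t in Icc (0:ℝ) T, f (T - t) ∂g.measure := by
  haveI := stj_finite_restrict f T
  haveI := stj_finite_restrict g T
  set μ := f.measure.restrict (Icc (0:ℝ) T) with hμ
  set ν := g.measure.restrict (Icc (0:ℝ) T) with hν
  set S : Set (ℝ × ℝ) := {p | p.1 + p.2 ≤ T} with hSdef
  have hS : MeasurableSet S :=
    measurableSet_le (measurable_fst.add measurable_snd) measurable_const
  -- generic inner-measure computation
  have inner : ∀ (h : StieltjesFunction ℝ), (∀ t < (0:ℝ), h t = 0) →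
      ∀ t ∈ Icc (0:ℝ) T,
      (h.measure.restrict (Icc (0:ℝ) T)) (Iic (T - t)) = ENNReal.ofReal (h (T - t)) := by
    intro h h0 t ht
    rw [Measure.restrict_apply measurableSet_Iic]
    have hset : Iic (T - t) ∩ Icc (0:ℝ) T = Icc 0 (T - t) := by
      ext s
      simp only [mem_inter_iff, mem_Iic, mem_Icc]
      constructor
      · rintro ⟨h1, h2, _⟩; exact ⟨h2, h1⟩
      · rintro ⟨h1, h2⟩
        have := ht.1
        exact ⟨h2, h1, by linarith⟩
    rw [hset, stj_measure_Icc_eq h h0]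
  have h1 : ∫⁻ t in Icc (0:ℝ) T, ENNReal.ofReal (g (T - t)) ∂f.measure
      = (μ.prod ν) S := by
    rw [Measure.prod_apply hS]
    refine (setLIntegral_congr_fun measurableSet_Icc
      (fun t ht => ?_)).symm
    have hpre : Prod.mk t ⁻¹' S = Iic (T - t) := by
      ext s
      simp only [mem_preimage, hSdef, mem_setOf_eq, mem_Iic]
      constructor <;> intro h <;> linarith
    rw [hpre, inner g hg0 t ht]
  have h2 : ∫⁻ t in Icc (0:ℝ) T, ENNReal.ofReal (f (T - t)) ∂g.measure
      = (μ.prod ν) S := by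
    rw [Measure.prod_apply_symm hS]
    refine (setLIntegral_congr_fun measurableSet_Icc
      (fun s hs => ?_)).symm
    have hpre : (fun t => (t, s)) ⁻¹' S = Iic (T - s) := by
      ext t
      simp only [mem_preimage, hSdef, mem_setOf_eq, mem_Iic]
      constructor <;> intro h <;> linarith
    rw [hpre, inner f hf0 s hs]
  have e1 : ∫ t in Icc (0:ℝ) T, g (T - t) ∂f.measure
      = (∫⁻ t in Icc (0:ℝ) T, ENNReal.ofReal (g (T - t)) ∂f.measure).toReal :=
    integral_eq_lintegral_of_nonneg_ae (ae_of_all _ fun t => hgnn _)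
      ((g.mono.measurable.comp (measurable_const.sub measurable_id)).aestronglyMeasurable)
  have e2 : ∫ t in Icc (0:ℝ) T, f (T - t) ∂g.measure
      = (∫⁻ t in Icc (0:ℝ) T, ENNReal.ofReal (f (T - t)) ∂g.measure).toReal :=
    integral_eq_lintegral_of_nonneg_ae (ae_of_all _ fun t => hfnn _)
      ((f.mono.measurable.comp (measurable_const.sub measurable_id)).aestronglyMeasurable)
  rw [e1, e2, h1, h2]

lemma stj_integrable_shift (T : ℝ) (f g : StieltjesFunction ℝ) (hgnn : ∀ t, 0 ≤ g t) :
    IntegrableOn (fun t => g (T - t)) (Icc (0:ℝ) T) f.measure := by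
  haveI := stj_finite_restrict f T
  refine Integrable.mono' (integrable_const (g T))
    ((g.mono.measurable.comp (measurable_const.sub measurable_id)).aestronglyMeasurable) ?_
  filter_upwards [ae_restrict_mem measurableSet_Icc] with t ht
  rw [Real.norm_eq_abs, abs_of_nonneg (hgnn _)]
  exact g.mono (by linarith [ht.1])

/-- Weak duality for M-CLP/M-CLP*. -/
theorem mclp_weak_duality {K J : ℕ} (A : Matrix (Fin K) (Fin J) ℝ)
    (β b : Fin K → ℝ) (γ c : Fin J → ℝ) (T : ℝ) (hT : 0 ≤ T)
    (U : Fin J → StieltjesFunction ℝ) (P : Fin K → StieltjesFunction ℝ)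
    (hU : mclpFeasible A β b T U) (hP : mclpDualFeasible A γ c T P) :
    mclpObj T γ c U ≤ mclpObj T β b P := by
  obtain ⟨hU0, hUnn, hUc⟩ := hU
  obtain ⟨hP0, hPnn, hPc⟩ := hP
  have hmem : ∀ t ∈ Icc (0:ℝ) T, T - t ∈ Icc (0:ℝ) T := by
    intro t ht
    exact ⟨by linarith [ht.2], by linarith [ht.1]⟩
  calc mclpObj T γ c U
      ≤ ∑ j, ∫ t in Icc (0:ℝ) T, (∑ k, A k j * P k (T - t)) ∂(U j).measure := by
        refine Finset.sum_le_sum fun j _ => ?_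
        refine setIntegral_mono_on ?_ ?_ measurableSet_Icc ?_
        · exact (continuous_const.add ((continuous_const.sub continuous_id).mul
            continuous_const)).integrableOn_Icc
        · exact integrable_finset_sum _ fun k _ =>
            (stj_integrable_shift T (U j) (P k) (fun t => hPnn k t)).const_mul _
        · intro t ht
          have := hPc (T - t) (hmem t ht) j
          calc γ j + (T - t) * c j = γ j + c j * (T - t) := by ring
            _ ≤ ∑ k, A k j * P k (T - t) := this
    _ = ∑ j, ∑ k, A k j * ∫ t in Icc (0:ℝ) T, P k (T - t) ∂(U j).measure := by
        refine Finset.sum_congr rfl fun j _ => ?_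
        rw [integral_finset_sum _ fun k _ =>
          (stj_integrable_shift T (U j) (P k) (fun t => hPnn k t)).const_mul _]
        exact Finset.sum_congr rfl fun k _ => integral_const_mul _ _
    _ = ∑ k, ∑ j, A k j * ∫ t in Icc (0:ℝ) T, U j (T - t) ∂(P k).measure := by
        rw [Finset.sum_comm]
        refine Finset.sum_congr rfl fun k _ => Finset.sum_congr rfl fun j _ => ?_
        rw [stj_swap T hT (U j) (P k) (hU0 j) (hP0 k) (fun t => hUnn j t)
          (fun t => hPnn k t)]
    _ = ∑ k, ∫ t in Icc (0:ℝ) T, (∑ j, A k j * U j (T - t)) ∂(P k).measure := by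
        refine Finset.sum_congr rfl fun k _ => ?_
        rw [integral_finset_sum _ fun j _ =>
          (stj_integrable_shift T (P k) (U j) (fun t => hUnn j t)).const_mul _]
        exact (Finset.sum_congr rfl fun j _ => (integral_const_mul _ _).symm)
    _ ≤ mclpObj T β b P := by
        refine Finset.sum_le_sum fun k _ => ?_
        refine setIntegral_mono_on ?_ ?_ measurableSet_Icc ?_
        · exact integrable_finset_sum _ fun j _ =>
            (stj_integrable_shift T (P k) (U j) (fun t => hUnn j t)).const_mul _
        · exact (continuous_const.add ((continuous_const.sub continuous_id).mul
            continuous_const)).integrableOn_Icc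
        · intro t ht
          have := hUc (T - t) (hmem t ht) k
          calc ∑ j, A k j * U j (T - t) ≤ β k + b k * (T - t) := this
            _ = β k + (T - t) * b k := by ring
end

section
/- M-CLP is feasible if and only if the standard linear program Test-LP is feasible, where Test-LP asks for vectors u, U ∈ ℝ^J with u, U ≥ 0, A u ≤ β, and A u + A U ≤ β + bT. -/
open MeasureTheory Set

noncomputable def rampSF (c d T : ℝ) (hc : 0 ≤ c) (hd : 0 ≤ d) (hT : 0 < T) :
    StieltjesFunction ℝ where
  toFun t := if t < 0 then 0 else c + d * min t T
  mono' x y hxy := by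
    by_cases hx : x < 0
    · by_cases hy : y < 0
      · simp [hx, hy]
      · simp only [if_pos hx, if_neg hy]
        have : 0 ≤ min y T := le_min (not_lt.1 hy) hT.le
        nlinarith
    · have hy : ¬ y < 0 := fun h => hx (lt_of_le_of_lt hxy h)
      simp only [if_neg hx, if_neg hy]
      have : min x T ≤ min y T := min_le_min hxy le_rfl
      nlinarith
  right_continuous' x := by
    by_cases hx : x < 0
    · have : ∀ᶠ y in nhds x, (if y < (0:ℝ) then (0:ℝ) else c + d * min y T) = 0 := by
        filter_upwards [eventually_lt_nhds hx] with y hy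
        simp [hy]
      apply ContinuousWithinAt.congr_of_eventuallyEq (f := fun _ => (0:ℝ))
      · exact continuousWithinAt_const
      · exact Filter.Eventually.filter_mono nhdsWithin_le_nhds this
      · simp [hx]
    · have hcont : ContinuousWithinAt (fun t => c + d * min t T) (Ici x) x := by
        apply Continuous.continuousWithinAt
        continuity
      apply hcont.congr
      · intro y hy
        have hy0 : ¬ y < 0 := fun h => hx (lt_of_le_of_lt hy h)
        simp [hy0]
      · simp [hx]

/-- M-CLP is feasible iff the Test-LP is feasible. -/
theorem mclp_feasible_iff_testLP {K J : ℕ} (A : Matrix (Fin K) (Fin J) ℝ)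
    (β b : Fin K → ℝ) (T : ℝ) (hT : 0 < T) :
    (∃ U : Fin J → StieltjesFunction ℝ, mclpFeasible A β b T U) ↔
    (∃ u U : Fin J → ℝ, (∀ j, 0 ≤ u j) ∧ (∀ j, 0 ≤ U j) ∧
      (∀ k, (∑ j, A k j * u j) ≤ β k) ∧
      (∀ k, (∑ j, A k j * (u j + U j)) ≤ β k + b k * T)) := by
  constructor
  · rintro ⟨U, hzero, hnn, hineq⟩
    refine ⟨fun j => U j 0, fun j => U j T - U j 0, fun j => hnn j 0,
      fun j => sub_nonneg.2 ((U j).mono' hT.le), ?_, ?_⟩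
    · intro k
      have := hineq 0 ⟨le_rfl, hT.le⟩ k
      simpa using this
    · intro k
      have := hineq T ⟨hT.le, le_rfl⟩ k
      simpa using this
  · rintro ⟨u, Uv, hu, hU, h1, h2⟩
    refine ⟨fun j => rampSF (u j) (Uv j / T) T (hu j) (div_nonneg (hU j) hT.le) hT, ?_, ?_, ?_⟩
    · intro j t ht
      simp [rampSF, ht]
    · intro j t
      by_cases ht : t < 0
      · simp [rampSF, ht]
      · simp only [rampSF]
        show (0:ℝ) ≤ if t < 0 then 0 else u j + Uv j / T * min t T
        rw [if_neg ht]
        have : 0 ≤ min t T := le_min (not_lt.1 ht) hT.le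
        have := div_nonneg (hU j) hT.le
        nlinarith [hu j]
    · intro t ht k
      have hts : rampSF = rampSF := rfl
      have hval : ∀ j, (rampSF (u j) (Uv j / T) T (hu j) (div_nonneg (hU j) hT.le) hT) t
          = u j + Uv j * (t / T) := by
        intro j
        show (if t < 0 then 0 else u j + Uv j / T * min t T) = u j + Uv j * (t / T)
        rw [if_neg (not_lt.2 ht.1), min_eq_left ht.2]
        ring
      simp only [hval]
      have hs : ∑ j, A k j * (u j + Uv j * (t / T))
          = (1 - t / T) * (∑ j, A k j * u j) + (t / T) * (∑ j, A k j * (u j + Uv j)) := by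
        rw [Finset.mul_sum, Finset.mul_sum, ← Finset.sum_add_distrib]
        apply Finset.sum_congr rfl
        intro j _
        ring
      rw [hs]
      have h01 : 0 ≤ t / T := div_nonneg ht.1 hT.le
      have h02 : t / T ≤ 1 := (div_le_one hT).2 ht.2
      calc (1 - t / T) * (∑ j, A k j * u j) + (t / T) * (∑ j, A k j * (u j + Uv j))
          ≤ (1 - t / T) * (β k) + (t / T) * (β k + b k * T) := by
            apply add_le_add
            · exact mul_le_mul_of_nonneg_left (h1 k) (by linarith)
            · exact mul_le_mul_of_nonneg_left (h2 k) h01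
        _ = β k + b k * (t / T * T) := by ring
        _ = β k + b k * t := by rw [div_mul_cancel₀ _ hT.ne']
end

section
/- If an SCLP problem (with data G, α, a, γ, c and no F, H, b, d components) has a feasible solution u(t), x(t), then its M-CLP extension is feasible: defining Ũ*(t) = (t/T)∫₀ᵀ u(s)ds and Ũ_f(t) = x(0) + (t/T)(x(T) − x(0)) = Ũ⁺(t) − Ũ⁻(t) with Ũ⁺, Ũ⁻ nondecreasing, the resulting Ũ satisfies the M-CLP extension constraints. -/
open Set MeasureTheory

/-- A feasible SCLP solution yields a feasible solution of the M-CLP extension: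
with Ũ*(t) = (t/T)∫₀ᵀ u and Ũ_f(t) = x(0) + (t/T)(x(T)-x(0)) split as a
difference Ũ⁺ - Ũ⁻ of nondecreasing nonnegative functions, the cumulative
controls are nonnegative, nondecreasing, and satisfy the extension constraints
G Ũ*(t) + Ũ⁺(t) - Ũ⁻(t) ≤ α + a t on [0,T]. -/
theorem sclp_feasible_implies_mclp_extension_feasible {K J : ℕ}
    (G : Matrix (Fin K) (Fin J) ℝ) (α a : Fin K → ℝ) (T : ℝ) (hT : 0 < T)
    (u : ℝ → Fin J → ℝ)
    (hu_int : ∀ j, IntegrableOn (fun s => u s j) (Icc 0 T))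
    (hu_nonneg : ∀ t ∈ Icc (0:ℝ) T, ∀ j, 0 ≤ u t j)
    (hfeas : ∀ t ∈ Icc (0:ℝ) T, ∀ k,
      (∫ s in (0:ℝ)..t, G.mulVec (u s) k) ≤ α k + a k * t)
    (x : ℝ → Fin K → ℝ)
    (hx : ∀ t k, x t k = α k + a k * t - ∫ s in (0:ℝ)..t, G.mulVec (u s) k)
    (Ustar : ℝ → Fin J → ℝ)
    (hUstar : ∀ t j, Ustar t j = (t / T) * ∫ s in (0:ℝ)..T, u s j) :
    (∀ j, MonotoneOn (fun t => Ustar t j) (Icc 0 T)) ∧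
    (∀ t ∈ Icc (0:ℝ) T, ∀ j, 0 ≤ Ustar t j) ∧
    ∃ Up Um : ℝ → Fin K → ℝ,
      (∀ k, MonotoneOn (fun t => Up t k) (Icc 0 T)) ∧
      (∀ k, MonotoneOn (fun t => Um t k) (Icc 0 T)) ∧
      (∀ t ∈ Icc (0:ℝ) T, ∀ k, 0 ≤ Up t k ∧ 0 ≤ Um t k) ∧
      (∀ t ∈ Icc (0:ℝ) T, ∀ k,
        Up t k - Um t k = x 0 k + (t / T) * (x T k - x 0 k)) ∧
      (∀ t ∈ Icc (0:ℝ) T, ∀ k,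
        G.mulVec (Ustar t) k + (Up t k - Um t k) ≤ α k + a k * t) := by
  have hII : ∀ j, IntervalIntegrable (fun s => u s j) volume 0 T := by
    intro j
    rw [intervalIntegrable_iff_integrableOn_Ioc_of_le hT.le]
    exact (hu_int j).mono_set Ioc_subset_Icc_self
  have hI : ∀ j, 0 ≤ ∫ s in (0:ℝ)..T, u s j := fun j =>
    intervalIntegral.integral_nonneg hT.le (fun s hs => hu_nonneg s hs j)
  have hx0 : ∀ k, x 0 k = α k := by
    intro k
    simp [hx]
  have hx0nn : ∀ k, 0 ≤ x 0 k := by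
    intro k
    rw [hx0]
    have := hfeas 0 (by constructor <;> simp [hT.le]) k
    simpa using this
  refine ⟨?_, ?_, ?_⟩
  · intro j t1 ht1 t2 ht2 h12
    simp only [hUstar]
    gcongr
    · exact hI j
  · intro t ht j
    rw [hUstar]
    exact mul_nonneg (div_nonneg ht.1 hT.le) (hI j)
  · refine ⟨fun t k => x 0 k + (t / T) * max (x T k - x 0 k) 0,
      fun t k => (t / T) * max (x 0 k - x T k) 0, ?_, ?_, ?_, ?_, ?_⟩
    · intro k t1 ht1 t2 ht2 h12
      dsimp only
      gcongr
    · intro k t1 ht1 t2 ht2 h12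
      dsimp only
      gcongr
    · intro t ht k
      have h1 : (0:ℝ) ≤ t / T := div_nonneg ht.1 hT.le
      exact ⟨add_nonneg (hx0nn k) (mul_nonneg h1 (le_max_right _ _)),
        mul_nonneg h1 (le_max_right _ _)⟩
    · intro t ht k
      dsimp only
      rw [add_sub_assoc, ← mul_sub,
        show x 0 k - x T k = -(x T k - x 0 k) by ring,
        max_zero_sub_max_neg_zero_eq_self]
    · intro t ht k
      have hsum : (∫ s in (0:ℝ)..T, G.mulVec (u s) k)
          = ∑ j, G k j * ∫ s in (0:ℝ)..T, u s j := by
        have : ∀ s, G.mulVec (u s) k = ∑ j, G k j * u s j := by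
          intro s; rfl
        simp_rw [this]
        rw [intervalIntegral.integral_finset_sum]
        · simp_rw [intervalIntegral.integral_const_mul]
        · intro j _
          exact (hII j).const_mul _
      have hGU : G.mulVec (Ustar t) k = (t / T) * ∑ j, G k j * ∫ s in (0:ℝ)..T, u s j := by
        show ∑ j, G k j * Ustar t j = _
        rw [Finset.mul_sum]
        congr 1
        ext j
        rw [hUstar]
        ring
      have hdiff : (x 0 k + (t / T) * max (x T k - x 0 k) 0) - (t / T) * max (x 0 k - x T k) 0
          = x 0 k + (t / T) * (x T k - x 0 k) := by
        rw [add_sub_assoc, ← mul_sub,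
          show x 0 k - x T k = -(x T k - x 0 k) by ring,
          max_zero_sub_max_neg_zero_eq_self]
      rw [hGU, hdiff, hx0, hx T k, hsum]
      apply le_of_eq
      field_simp
      ring
end

section
/- Consider the SCLP problem with G = 1 (scalar), α ≥ 0, a > 0, γ > 0, c > 0 and no other constraints. Then SCLP (maximize ∫₀ᵀ (γ+(T−t)c)u(t)dt subject to ∫₀ᵗ u(s)ds ≤ α+at, u ≥ 0) is feasible and bounded, its symmetric dual SCLP* is infeasible, and the supremum of the SCLP objective equals γ(α + aT) + cT(α + aT/2). -/
open Set MeasureTheory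

/-- The set of attainable objective values of the scalar SCLP:
maximize ∫₀ᵀ (γ+(T-t)c)u(t)dt over u ≥ 0 with ∫₀ᵗ u ≤ α + at on [0,T]. -/
def sclpValues (α a γ c T : ℝ) : Set ℝ :=
  {z | ∃ u : ℝ → ℝ, IntegrableOn u (Icc 0 T) ∧ (∀ t ∈ Icc (0:ℝ) T, 0 ≤ u t) ∧
    (∀ t ∈ Icc (0:ℝ) T, (∫ s in (0:ℝ)..t, u s) ≤ α + a * t) ∧
    z = ∫ t in (0:ℝ)..T, (γ + (T - t) * c) * u t}

/-- Polynomial integral used repeatedly. -/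
lemma sclp_poly_integral (γ c T b : ℝ) :
    (∫ t in (0:ℝ)..b, (γ + (T - t) * c)) = (γ + T * c) * b - c * (b ^ 2 / 2) := by
  have h : (∫ t in (0:ℝ)..b, (γ + (T - t) * c))
      = ∫ t in (0:ℝ)..b, ((γ + T * c) - c * t) := by
    apply intervalIntegral.integral_congr
    intro x _; ring
  rw [h, intervalIntegral.integral_sub intervalIntegrable_const
    (intervalIntegral.intervalIntegrable_id.const_mul c),
    intervalIntegral.integral_const, intervalIntegral.integral_const_mul, integral_id]
  simp only [smul_eq_mul]
  ring

/-- Fubini step: for integrable u on (0,T], ∫ (T-t) u(t) dt = ∫ (∫₀ˢ u) ds,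
and hence the weighted objective upper bound. -/
lemma sclp_upper_bound (α a γ c T : ℝ) (hγ : 0 < γ) (hc : 0 < c) (hT : 0 < T)
    (u : ℝ → ℝ) (hu : IntegrableOn u (Icc 0 T))
    (hcon : ∀ t ∈ Icc (0:ℝ) T, (∫ s in (0:ℝ)..t, u s) ≤ α + a * t) :
    (∫ t in (0:ℝ)..T, (γ + (T - t) * c) * u t)
      ≤ γ * (α + a * T) + c * T * (α + a * T / 2) := by
  have hIoc : IntegrableOn u (Ioc 0 T) := hu.mono_set Ioc_subset_Icc_self
  set μ := volume.restrict (Ioc (0:ℝ) T) with hμ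
  -- the product function
  set S : Set (ℝ × ℝ) := {p : ℝ × ℝ | p.1 < p.2} with hS
  have hSm : MeasurableSet S := measurableSet_lt measurable_fst measurable_snd
  set F : ℝ × ℝ → ℝ := S.indicator (fun p => u p.1) with hF
  have hG : Integrable (fun z : ℝ × ℝ => u z.1) (μ.prod μ) := by
    have := hIoc.mul_prod (integrable_const (1:ℝ) : Integrable (fun _ : ℝ => (1:ℝ)) μ)
    simpa using this
  have hFint : Integrable F (μ.prod μ) := hG.indicator hSm
  -- Fubini
  have hswap : (∫ t, (∫ s, F (t, s) ∂μ) ∂μ) = ∫ s, (∫ t, F (t, s) ∂μ) ∂μ :=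
    MeasureTheory.integral_integral_swap
      (f := fun t s => F (t, s)) (μ := μ) (ν := μ)
      (by simpa [Function.uncurry_def] using hFint)
  -- left side equals ∫ (T - t) * u t dμ
  have hleft : (∫ t, (∫ s, F (t, s) ∂μ) ∂μ) = ∫ t in Ioc (0:ℝ) T, (T - t) * u t := by
    rw [hμ]
    apply setIntegral_congr_fun measurableSet_Ioc
    intro t ht
    show (∫ s in Ioc (0:ℝ) T, F (t, s)) = (T - t) * u t
    have h1 : (fun s => F (t, s)) = (Ioi t).indicator (fun _ => u t) := by
      funext s
      by_cases h : t < s <;> simp [hF, hS, Set.indicator_apply, h]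
    rw [h1, integral_indicator measurableSet_Ioi, Measure.restrict_restrict measurableSet_Ioi]
    have h2 : Ioi t ∩ Ioc 0 T = Ioc t T := by
      ext x
      simp only [mem_inter_iff, mem_Ioi, mem_Ioc]
      constructor
      · rintro ⟨h3, _, h5⟩; exact ⟨h3, h5⟩
      · rintro ⟨h3, h4⟩; exact ⟨h3, ht.1.trans h3, h4⟩
    rw [h2, setIntegral_const, measureReal_def, Real.volume_Ioc, ENNReal.toReal_ofReal (by linarith [ht.2])]
    simp [smul_eq_mul]
  -- right side: inner integral is the cumulative ∫₀ˢ u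
  have hrightint : Integrable (fun s => ∫ t, F (t, s) ∂μ) μ := hFint.integral_prod_right
  have hinner : ∀ s ∈ Ioc (0:ℝ) T, (∫ t, F (t, s) ∂μ) = ∫ t in (0:ℝ)..s, u t := by
    intro s hs
    have h1 : (fun t => F (t, s)) = (Iio s).indicator u := by
      funext t
      by_cases h : t < s <;> simp [hF, hS, Set.indicator_apply, h]
    rw [h1, hμ, integral_indicator measurableSet_Iio, Measure.restrict_restrict measurableSet_Iio]
    have h2 : Iio s ∩ Ioc 0 T = Ioo 0 s := by
      ext x
      simp only [mem_inter_iff, mem_Iio, mem_Ioc, mem_Ioo]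
      constructor
      · rintro ⟨h3, h4, _⟩; exact ⟨h4, h3⟩
      · rintro ⟨h3, h4⟩; exact ⟨h4, h3, (le_of_lt h4).trans hs.2⟩
    rw [h2, ← integral_Ioc_eq_integral_Ioo, intervalIntegral.integral_of_le hs.1.le]
  -- bound the right side
  have hbound : (∫ s, (∫ t, F (t, s) ∂μ) ∂μ) ≤ α * T + a * (T ^ 2 / 2) := by
    have hpoly : IntegrableOn (fun s : ℝ => α + a * s) (Ioc 0 T) :=
      ((continuous_const.add (continuous_const.mul continuous_id)).integrableOn_Ioc)
    have hmono : (∫ s, (∫ t, F (t, s) ∂μ) ∂μ) ≤ ∫ s in Ioc (0:ℝ) T, (α + a * s) := by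
      rw [hμ]
      apply setIntegral_mono_on (by rwa [hμ] at hrightint) hpoly measurableSet_Ioc
      intro s hs
      rw [hinner s hs]
      exact hcon s ⟨hs.1.le, hs.2⟩
    have hval : (∫ s in Ioc (0:ℝ) T, (α + a * s)) = α * T + a * (T ^ 2 / 2) := by
      rw [← intervalIntegral.integral_of_le hT.le,
        intervalIntegral.integral_add intervalIntegrable_const
          (intervalIntegral.intervalIntegrable_id.const_mul a),
        intervalIntegral.integral_const, intervalIntegral.integral_const_mul, integral_id]
      simp only [smul_eq_mul]
      ring
    linarith
  have hkey : (∫ t in Ioc (0:ℝ) T, (T - t) * u t) ≤ α * T + a * (T ^ 2 / 2) := by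
    rw [← hleft]; rw [hswap]; exact hbound
  -- now split the objective
  have hwu : IntegrableOn (fun t => (T - t) * u t) (Ioc 0 T) := by
    have : IntegrableOn (fun t => (T - t) * u t) (Icc 0 T) :=
      IntegrableOn.continuousOn_mul (continuous_const.sub continuous_id).continuousOn hu
        isCompact_Icc
    exact this.mono_set Ioc_subset_Icc_self
  have hsplit : (∫ t in (0:ℝ)..T, (γ + (T - t) * c) * u t)
      = γ * (∫ t in (0:ℝ)..T, u t) + c * ∫ t in Ioc (0:ℝ) T, (T - t) * u t := by
    rw [intervalIntegral.integral_of_le hT.le]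
    have h1 : (∫ t in Ioc (0:ℝ) T, (γ + (T - t) * c) * u t)
        = ∫ t in Ioc (0:ℝ) T, (γ * u t + c * ((T - t) * u t)) := by
      apply setIntegral_congr_fun measurableSet_Ioc
      intro t _; ring
    rw [h1, integral_add (hIoc.const_mul γ) (hwu.const_mul c),
      integral_const_mul, integral_const_mul, intervalIntegral.integral_of_le hT.le]
  have hA : (∫ t in (0:ℝ)..T, u t) ≤ α + a * T := hcon T ⟨hT.le, le_refl T⟩
  calc (∫ t in (0:ℝ)..T, (γ + (T - t) * c) * u t)
      = γ * (∫ t in (0:ℝ)..T, u t) + c * ∫ t in Ioc (0:ℝ) T, (T - t) * u t := hsplit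
    _ ≤ γ * (α + a * T) + c * (α * T + a * (T ^ 2 / 2)) := by
        have := mul_le_mul_of_nonneg_left hA hγ.le
        have := mul_le_mul_of_nonneg_left hkey hc.le
        linarith
    _ = γ * (α + a * T) + c * T * (α + a * T / 2) := by ring

/-- The approximating feasible solutions: value L - α c ε / 2 is attained. -/
lemma sclp_member (α a γ c T ε : ℝ)
    (hα : 0 ≤ α) (ha : 0 < a) (hT : 0 < T) (hε : 0 < ε) (hεT : ε ≤ T) :
    γ * (α + a * T) + c * T * (α + a * T / 2) - α * c * ε / 2
      ∈ sclpValues α a γ c T := by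
  set u : ℝ → ℝ := fun t => a + (α / ε) * ({x : ℝ | x ≤ ε}.indicator (fun _ => (1:ℝ)) t)
    with hu
  have hIic : {x : ℝ | x ≤ ε} = Iic ε := rfl
  have hms : MeasurableSet {x : ℝ | x ≤ ε} := by rw [hIic]; exact measurableSet_Iic
  have hindInt : ∀ x y : ℝ, IntervalIntegrable
      (fun t => ({x : ℝ | x ≤ ε}.indicator (fun _ => (1:ℝ)) t)) volume x y := by
    intro x y
    rw [intervalIntegrable_iff]
    have : Integrable ({x : ℝ | x ≤ ε}.indicator (fun _ => (1:ℝ)))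
        (volume.restrict (Ioc (min x y) (max x y))) :=
      (integrable_const (1:ℝ)).indicator hms
    simpa [Set.uIoc, IntegrableOn] using this
  have huInt : ∀ x y : ℝ, IntervalIntegrable u volume x y := by
    intro x y
    exact intervalIntegrable_const.add ((hindInt x y).const_mul _)
  refine ⟨u, ?_, ?_, ?_, ?_⟩
  · -- integrability on Icc 0 T
    have : Integrable ({x : ℝ | x ≤ ε}.indicator (fun _ => (1:ℝ)))
        (volume.restrict (Icc (0:ℝ) T)) := (integrable_const (1:ℝ)).indicator hms
    exact Integrable.add (integrable_const a) (this.const_mul _)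
  · -- nonnegativity
    intro t _
    have : (0:ℝ) ≤ {x : ℝ | x ≤ ε}.indicator (fun _ => (1:ℝ)) t :=
      Set.indicator_nonneg (fun _ _ => zero_le_one) t
    have hαε : 0 ≤ α / ε := div_nonneg hα hε.le
    positivity
  · -- constraint
    intro t ht
    have hsplit : (∫ s in (0:ℝ)..t, u s)
        = a * t + (α / ε) * ∫ s in (0:ℝ)..t,
            ({x : ℝ | x ≤ ε}.indicator (fun _ => (1:ℝ)) s) := by
      rw [hu]
      rw [intervalIntegral.integral_add intervalIntegrable_const ((hindInt 0 t).const_mul _),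
        intervalIntegral.integral_const, intervalIntegral.integral_const_mul]
      simp [smul_eq_mul, mul_comm]
    by_cases hcase : t ≤ ε
    · have hval : (∫ s in (0:ℝ)..t, ({x : ℝ | x ≤ ε}.indicator (fun _ => (1:ℝ)) s)) = t := by
        have : EqOn (fun s => ({x : ℝ | x ≤ ε}.indicator (fun _ => (1:ℝ)) s))
            (fun _ => (1:ℝ)) (uIcc 0 t) := by
          intro x hx
          rw [uIcc_of_le ht.1] at hx
          have : x ≤ ε := hx.2.trans hcase
          simp [Set.indicator_apply, this]
        rw [intervalIntegral.integral_congr this, intervalIntegral.integral_const,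
          smul_eq_mul, mul_one, sub_zero]
      rw [hsplit, hval]
      have : (α / ε) * t ≤ α := by
        rw [div_mul_eq_mul_div, div_le_iff₀ hε]
        nlinarith [ht.1]
      linarith
    · push_neg at hcase
      have hval : (∫ s in (0:ℝ)..t, ({x : ℝ | x ≤ ε}.indicator (fun _ => (1:ℝ)) s)) = ε := by
        rw [intervalIntegral.integral_indicator ⟨hε.le, hcase.le⟩,
          intervalIntegral.integral_const, smul_eq_mul, mul_one, sub_zero]
      rw [hsplit, hval]
      rw [div_mul_cancel₀ _ hε.ne']
      linarith
  · -- value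
    have hsplit : (∫ t in (0:ℝ)..T, (γ + (T - t) * c) * u t)
        = a * (∫ t in (0:ℝ)..T, (γ + (T - t) * c))
          + (α / ε) * ∫ t in (0:ℝ)..T,
              (γ + (T - t) * c) * ({x : ℝ | x ≤ ε}.indicator (fun _ => (1:ℝ)) t) := by
      have h1 : (fun t => (γ + (T - t) * c) * u t)
          = fun t => (γ + (T - t) * c) * a
            + (α / ε) * ((γ + (T - t) * c) * ({x : ℝ | x ≤ ε}.indicator (fun _ => (1:ℝ)) t)) := by
        funext t; rw [hu]; ring
      rw [h1]
      have hpoly : IntervalIntegrable (fun t => (γ + (T - t) * c)) volume 0 T :=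
        ((continuous_const.add ((continuous_const.sub continuous_id).mul
          continuous_const)).intervalIntegrable 0 T)
      have hprod : IntervalIntegrable
          (fun t => (γ + (T - t) * c) * ({x : ℝ | x ≤ ε}.indicator (fun _ => (1:ℝ)) t))
          volume 0 T :=
        (hindInt 0 T).continuousOn_mul (continuous_const.add ((continuous_const.sub
          continuous_id).mul continuous_const)).continuousOn
      rw [intervalIntegral.integral_add (hpoly.mul_const a) (hprod.const_mul _),
        intervalIntegral.integral_mul_const, intervalIntegral.integral_const_mul]
      ring
    have hind : (∫ t in (0:ℝ)..T,
        (γ + (T - t) * c) * ({x : ℝ | x ≤ ε}.indicator (fun _ => (1:ℝ)) t))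
        = ∫ t in (0:ℝ)..ε, (γ + (T - t) * c) := by
      have h1 : (fun t => (γ + (T - t) * c) * ({x : ℝ | x ≤ ε}.indicator (fun _ => (1:ℝ)) t))
          = fun t => ({x : ℝ | x ≤ ε}.indicator (fun t => (γ + (T - t) * c)) t) := by
        funext t
        by_cases h : t ≤ ε <;> simp [Set.indicator_apply, h]
      rw [h1, intervalIntegral.integral_indicator ⟨hε.le, hεT⟩]
    rw [hsplit, hind, sclp_poly_integral, sclp_poly_integral]
    field_simp
    ring

/-- Scalar SCLP with G=1, α ≥ 0, a > 0, γ > 0, c > 0: SCLP is feasible and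
bounded, its dual SCLP* is infeasible (the constraint ∫₀ᵗp ≥ γ > 0 fails at
t=0), and sup V(SCLP) = γ(α+aT) + cT(α+aT/2). -/
theorem sclp_case1_dual_infeasible (α a γ c T : ℝ)
    (hα : 0 ≤ α) (ha : 0 < a) (hγ : 0 < γ) (hc : 0 < c) (hT : 0 < T) :
    (sclpValues α a γ c T).Nonempty ∧
    BddAbove (sclpValues α a γ c T) ∧
    (¬ ∃ p : ℝ → ℝ, IntegrableOn p (Icc 0 T) ∧ (∀ t ∈ Icc (0:ℝ) T, 0 ≤ p t) ∧
        ∀ t ∈ Icc (0:ℝ) T, γ + c * t ≤ ∫ s in (0:ℝ)..t, p s) ∧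
    sSup (sclpValues α a γ c T) = γ * (α + a * T) + c * T * (α + a * T / 2) := by
  set L := γ * (α + a * T) + c * T * (α + a * T / 2) with hL
  clear_value L
  have hub : ∀ z ∈ sclpValues α a γ c T, z ≤ L := by
    rintro z ⟨u, hu, hpos, hcon, rfl⟩
    rw [hL]
    exact sclp_upper_bound α a γ c T hγ hc hT u hu hcon
  have hne : (sclpValues α a γ c T).Nonempty :=
    ⟨_, sclp_member α a γ c T T hα ha hT hT le_rfl⟩
  refine ⟨hne, ⟨L, hub⟩, ?_, ?_⟩
  · rintro ⟨p, _, _, hp⟩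
    have h0 := hp 0 ⟨le_refl 0, hT.le⟩
    simp at h0
    linarith
  · apply le_antisymm
    · exact csSup_le hne hub
    · -- L ≤ sSup: approximate
      have hbdd : BddAbove (sclpValues α a γ c T) := ⟨L, hub⟩
      have key : ∀ ε : ℝ, 0 < ε → ε ≤ T →
          L - α * c * ε / 2 ≤ sSup (sclpValues α a γ c T) := by
        intro ε h1 h2
        rw [hL]
        exact le_csSup hbdd (sclp_member α a γ c T ε hα ha hT h1 h2)
      rcases eq_or_lt_of_le hα with h0 | h0
      · have h4 := key T hT le_rfl
        have h5 : α * c * T / 2 = 0 := by rw [← h0]; ring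
        linarith
      · have hαcpos : 0 < α * c := mul_pos h0 hc
        apply le_of_forall_pos_le_add
        intro δ hδ
        obtain ⟨ε, hεpos, hεT, h2⟩ :
            ∃ ε : ℝ, 0 < ε ∧ ε ≤ T ∧ ε ≤ 2 * δ / (α * c) :=
          ⟨min T (2 * δ / (α * c)),
            lt_min hT (div_pos (by linarith) hαcpos), min_le_left _ _, min_le_right _ _⟩
        have h3 : α * c * ε ≤ 2 * δ := by
          rw [← le_div_iff₀' hαcpos]; exact h2
        have h4 := key ε hεpos hεT
        have h5 : α * c * ε / 2 ≤ δ := by linarith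
        linarith
end
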